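/- For all positive integers m and n with n ≥ 2, the number of K_n^m-parking functions of length n−1 equals m^(n−1) · n^(n−2). -/

import Mathlib

/-- A `K_n^m`-parking function: a tuple `(a_1,…,a_{n−1})` of nonnegative integers such
that for each `i ∈ {1,…,n−1}` at least `i` of the entries `a_k` satisfy `a_k ≤ m·i − 1`.
(Here `i : Fin (n-1)` corresponds to the index `i+1 ∈ {1,…,n−1}`.) -/
def IsParkingFunction (m n : ℕ) (a : Fin (n - 1) → ℕ) : Prop :=
  ∀ i : Fin (n - 1),
    (i : ℕ) + 1 ≤ (Finset.univ.filter (fun k => a k ≤ m * ((i : ℕ) + 1) - 1)).card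

instance (m n : ℕ) : DecidablePred (IsParkingFunction m n) := fun _ => by
  unfold IsParkingFunction; infer_instance

namespace ParkAux

/-! ### The walk associated to a tuple of residues -/

def cnt (N p : ℕ) (y : Fin p → ZMod N) (z : ℕ) : ℕ :=
  (Finset.univ.filter fun k => y k = (z : ZMod N)).card

def csum (N p : ℕ) (y : Fin p → ZMod N) (x : ℕ) : ℕ :=
  ∑ z ∈ Finset.range x, cnt N p y z

def walk (N p m : ℕ) (y : Fin p → ZMod N) (x : ℕ) : ℤ :=
  (x : ℤ) - m * csum N p y x

def bc (N : ℕ) {p : ℕ} (y : Fin p → ZMod N) (s : ZMod N) (L : ℕ) : ℕ :=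
  (Finset.univ.filter fun k => N - L ≤ (y k - s).val).card

variable {N p m : ℕ} (y : Fin p → ZMod N)

lemma sum_cnt_period [NeZero N] (x : ℕ) :
    ∑ z ∈ Finset.range N, cnt N p y (x + z) = p := by
  unfold cnt
  simp only [Finset.card_filter]
  rw [Finset.sum_comm]
  have key : ∀ k : Fin p,
      (∑ z ∈ Finset.range N, if y k = ((x + z : ℕ) : ZMod N) then 1 else 0) = 1 := by
    intro k
    rw [Finset.sum_eq_single ((y k - (x : ℕ)).val)]
    · simp only [Nat.cast_add, ZMod.natCast_val, ZMod.cast_id]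
      rw [if_pos (by ring)]
    · intro z hz hne
      rw [if_neg]
      intro h
      apply hne
      have h2 : ((z : ℕ) : ZMod N) = y k - (x : ℕ) := by
        rw [h]; push_cast; ring
      rw [← ZMod.val_cast_of_lt (Finset.mem_range.mp hz), h2]
    · intro h
      exact absurd (Finset.mem_range.mpr (ZMod.val_lt _)) h
  rw [Finset.sum_congr rfl (fun k _ => key k)]
  simp

lemma csum_add (x L : ℕ) :
    csum N p y (x + L) = csum N p y x + ∑ z ∈ Finset.range L, cnt N p y (x + z) :=
  Finset.sum_range_add _ _ _

lemma csum_add_period [NeZero N] (x : ℕ) : csum N p y (x + N) = csum N p y x + p := by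
  rw [csum_add]
  congr 1
  exact sum_cnt_period y x

lemma walk_add_period [NeZero N] (x : ℕ) :
    walk N p m y (x + N) = walk N p m y x + ((N : ℤ) - m * p) := by
  unfold walk
  rw [csum_add_period]
  push_cast
  ring

lemma walk_step_le (x : ℕ) : walk N p m y (x + 1) ≤ walk N p m y x + 1 := by
  unfold walk
  have h : csum N p y x ≤ csum N p y (x + 1) := by
    unfold csum
    exact Finset.sum_le_sum_of_subset (Finset.range_subset_range.mpr (by omega))
  have h2 : (m : ℤ) * csum N p y x ≤ (m : ℤ) * csum N p y (x + 1) := by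
    exact_mod_cast Nat.mul_le_mul_left m h
  push_cast
  omega

lemma bc_mono (s : ZMod N) {L1 L2 : ℕ} (h : L1 ≤ L2) : bc N y s L1 ≤ bc N y s L2 := by
  apply Finset.card_le_card
  apply Finset.monotone_filter_right
  intro k hk
  omega

lemma bc_count [NeZero N] (s : ZMod N) (L : ℕ) (hL : L ≤ N) :
    csum N p y (s.val + N) = csum N p y (s.val + N - L) + bc N y s L := by
  have hsv : s.val + N - L = s.val + (N - L) := by omega
  rw [hsv, show s.val + N = (s.val + (N - L)) + L by omega, csum_add]
  congr 1
  unfold bc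
  rw [Finset.card_eq_sum_card_fiberwise
    (f := fun k => (y k - s).val) (t := Finset.Ico (N - L) N)
    (fun k hk => by
      simp only [Finset.mem_coe, Finset.mem_filter] at hk
      exact Finset.mem_Ico.mpr ⟨hk.2, ZMod.val_lt _⟩)]
  rw [Finset.sum_Ico_eq_sum_range]
  apply Finset.sum_congr (by congr 1; omega)
  intro z hz
  have hzL : z < L := by rw [Finset.mem_range] at hz; omega
  rw [Finset.filter_filter]
  have h1 : (Finset.univ.filter fun k : Fin p =>
        (N - L ≤ (y k - s).val) ∧ (y k - s).val = N - L + z)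
      = Finset.univ.filter fun k => (y k - s).val = N - L + z := by
    apply Finset.filter_congr
    intro k _
    constructor
    · exact fun h => h.2
    · exact fun h => ⟨by omega, h⟩
  rw [h1]
  have h2 : ∀ k : Fin p, ((y k - s).val = N - L + z) ↔
      y k = ((s.val + (N - L) + z : ℕ) : ZMod N) := by
    intro k
    have hcast : (((s.val + (N - L) + z : ℕ)) : ZMod N) = s + ((N - L + z : ℕ) : ZMod N) := by
      push_cast
      rw [ZMod.natCast_val, ZMod.cast_id]
      ring
    constructor
    · intro hv
      have h3 : y k - s = ((N - L + z : ℕ) : ZMod N) := by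
        apply ZMod.val_injective
        rw [ZMod.val_cast_of_lt (show N - L + z < N by omega), hv]
      rw [hcast, ← h3]; ring
    · intro hk
      have h3 : y k - s = ((N - L + z : ℕ) : ZMod N) := by rw [hk, hcast]; ring
      rw [h3, ZMod.val_cast_of_lt (show N - L + z < N by omega)]
  unfold cnt
  congr 1
  exact Finset.filter_congr fun k _ => (h2 k).symm

lemma compl_card (s : ZMod N) (L : ℕ) (hL : L ≤ N) :
    (Finset.univ.filter fun k => (y k - s).val < L).card + bc N y s (N - L) = p := by
  have h1 : bc N y s (N - L)
      = (Finset.univ.filter fun k : Fin p => ¬ (y k - s).val < L).card := by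
    unfold bc
    congr 1
    apply Finset.filter_congr
    intro k _
    constructor
    · intro h; omega
    · intro h; omega
  rw [h1, Finset.card_filter_add_card_filter_not, Finset.card_univ, Fintype.card_fin]

/-! ### Record counting -/

lemma hWPer' (N : ℕ) {W : ℕ → ℤ} {m : ℕ} (hWper : ∀ x, W (x + N) = W x + m)
    (s' : ℕ) (h : N ≤ s') : W s' = W (s' - N) + m := by
  have := hWper (s' - N)
  rwa [Nat.sub_add_cancel h] at this

lemma ext_record (W : ℕ → ℤ) (N : ℕ) (hN : 0 < N) (hW : ∀ x, W x < W (x + N))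
    (s' : ℕ) (h : ∀ x, x < s' → s' ≤ x + N → W x < W s') :
    ∀ x, x < s' → W x < W s' := by
  have key : ∀ k x, s' - x ≤ k → x < s' → W x < W s' := by
    intro k
    induction k with
    | zero => intro x hk hx; omega
    | succ k ih =>
      intro x hk hx
      by_cases hxN : s' ≤ x + N
      · exact h x hx hxN
      · exact lt_trans (hW x) (ih (x + N) (by omega) (by omega))
  intro x hx
  exact key (s' - x) x le_rfl hx

lemma records_card (W : ℕ → ℤ) (N m : ℕ) (hN : 0 < N) (hm : 0 < m)
    (hW0 : W 0 = 0)
    (hWper : ∀ x, W (x + N) = W x + m)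
    (hWstep : ∀ x, W (x + 1) ≤ W x + 1) :
    ((Finset.Ico N (2 * N)).filter fun s' => ∀ x < s', W x < W s').card = m := by
  obtain ⟨x0, hx0mem, hx0⟩ :=
    Finset.exists_max_image (Finset.range N) W ⟨0, Finset.mem_range.mpr hN⟩
  set M0 := W x0 with hM0
  have hx0N : x0 < N := Finset.mem_range.mp hx0mem
  have hmax : ∀ x, x < N → W x ≤ M0 := fun x hx => hx0 x (Finset.mem_range.mpr hx)
  have hM0nonneg : (0 : ℤ) ≤ M0 := hW0 ▸ hx0 0 (Finset.mem_range.mpr hN)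
  rw [show m = (Finset.Icc (M0 + 1) (M0 + m)).card by
    rw [Int.card_Icc]; omega]
  apply Finset.card_bij (fun s' _ => W s')
  · intro s' hs'
    simp only [Finset.mem_filter, Finset.mem_Ico] at hs'
    obtain ⟨⟨h1, h2⟩, hrec⟩ := hs'
    rw [Finset.mem_Icc]
    constructor
    · have := hrec x0 (lt_of_lt_of_le hx0N h1); omega
    · have heq := hWPer' N hWper s' h1
      have : W (s' - N) ≤ M0 := hmax _ (by omega)
      omega
  · intro s1 hs1 s2 hs2 heq
    simp only [Finset.mem_filter, Finset.mem_Ico] at hs1 hs2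
    rcases lt_trichotomy s1 s2 with h | h | h
    · exact absurd (hs2.2 s1 h) (by omega)
    · exact h
    · exact absurd (hs1.2 s2 h) (by omega)
  · intro v hv
    rw [Finset.mem_Icc] at hv
    have hex : ∃ x, v ≤ W x := ⟨x0 + N, by rw [hWper]; omega⟩
    classical
    set s' := Nat.find hex with hs'def
    have hs'spec : v ≤ W s' := Nat.find_spec hex
    have hs'min : ∀ x, x < s' → W x < v := by
      intro x hx
      have := Nat.find_min hex hx
      omega
    have hs'ge : N ≤ s' := by
      by_contra hlt
      have := hmax s' (by omega)
      omega
    have hs'lt : s' < 2 * N := by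
      have : s' ≤ x0 + N := Nat.find_min' hex (by rw [hWper]; omega)
      omega
    have hWeq : W s' = v := by
      have h0 : 0 < s' := by omega
      have h1 : W (s' - 1) < v := hs'min _ (by omega)
      have h2 : W s' ≤ W (s' - 1) + 1 := by
        have h3 : s' - 1 + 1 = s' := by omega
        rw [← h3]; exact hWstep _
      omega
    refine ⟨s', ?_, hWeq⟩
    simp only [Finset.mem_filter, Finset.mem_Ico]
    exact ⟨⟨hs'ge, hs'lt⟩, fun x hx => by rw [hWeq]; exact hs'min x hx⟩

end ParkAux

namespace ParkAux

variable {m n : ℕ}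

lemma park_iff_records (hm : 0 < m) (hn : 2 ≤ n) (y : Fin (n - 1) → ZMod (m * n))
    (s : ZMod (m * n)) :
    (IsParkingFunction m n fun k => (y k - s).val) ↔
      ∀ x < s.val + m * n,
        walk (m * n) (n - 1) m y x < walk (m * n) (n - 1) m y (s.val + m * n) := by
  haveI : NeZero (m * n) := ⟨by positivity⟩
  have hNpos : 0 < m * n := by positivity
  -- Step 1: parking ↔ window counts at multiples of m
  have hPkQ1 : (IsParkingFunction m n fun k => (y k - s).val) ↔
      ∀ j, 1 ≤ j → j ≤ n → bc (m * n) y s (m * j) < j := by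
    constructor
    · intro hP j hj1 hjn
      by_cases hjn1 : n - 1 < j
      · -- trivial case : bc ≤ n - 1 < j
        have hle : bc (m * n) y s (m * j) ≤ (Finset.univ : Finset (Fin (n - 1))).card :=
          Finset.card_filter_le _ _
        rw [Finset.card_univ, Fintype.card_fin] at hle
        omega
      · push_neg at hjn1
        have hi : (n - 1 - j) + 1 ≤ (Finset.univ.filter fun k =>
            (y k - s).val ≤ m * ((n - 1 - j) + 1) - 1).card := hP ⟨n - 1 - j, by omega⟩
        rw [show n - 1 - j + 1 = n - j by omega] at hi
        have hL1 : 1 ≤ m * (n - j) := Nat.mul_pos hm (by omega)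
        have hfc : (Finset.univ.filter fun k : Fin (n - 1) =>
              (y k - s).val ≤ m * (n - j) - 1)
            = Finset.univ.filter fun k => (y k - s).val < m * (n - j) :=
          Finset.filter_congr fun k _ => by omega
        rw [hfc] at hi
        have hLsum : m * (n - j) + m * j = m * n := by
          rw [← Nat.mul_add, Nat.sub_add_cancel (by omega)]
        have hcompl := compl_card y s (m * (n - j)) (by omega)
        rw [show m * n - m * (n - j) = m * j by omega] at hcompl
        omega
    · intro hQ i
      have hi1 : (i : ℕ) < n - 1 := i.isLt
      have hb := hQ (n - 1 - (i : ℕ)) (by omega) (by omega)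
      have hLsum : m * ((i : ℕ) + 1) + m * (n - 1 - (i : ℕ)) = m * n := by
        rw [← Nat.mul_add]
        congr 1
        omega
      have hL1 : 1 ≤ m * ((i : ℕ) + 1) := Nat.mul_pos hm (by omega)
      have hcompl := compl_card y s (m * ((i : ℕ) + 1)) (by omega)
      rw [show m * n - m * ((i : ℕ) + 1) = m * (n - 1 - (i : ℕ)) by omega] at hcompl
      have hfc : (Finset.univ.filter fun k : Fin (n - 1) =>
            (y k - s).val ≤ m * ((i : ℕ) + 1) - 1)
          = Finset.univ.filter fun k => (y k - s).val < m * ((i : ℕ) + 1) :=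
        Finset.filter_congr fun k _ => by omega
      rw [hfc]
      omega
  -- Step 2: multiples of m ↔ all window lengths
  have hQ12 : (∀ j, 1 ≤ j → j ≤ n → bc (m * n) y s (m * j) < j) ↔
      (∀ L, 1 ≤ L → L ≤ m * n → m * bc (m * n) y s L < L) := by
    constructor
    · intro h L hL1 hLN
      have hd := Nat.div_add_mod (L + m - 1) m
      have hr : (L + m - 1) % m < m := Nat.mod_lt _ hm
      obtain ⟨j, hjdef⟩ : ∃ j, j = (L + m - 1) / m := ⟨_, rfl⟩
      obtain ⟨q, hq⟩ : ∃ q, q = m * j := ⟨_, rfl⟩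
      rw [← hjdef, ← hq] at hd
      have hqL : L ≤ q := by omega
      have hqU : q ≤ L + m - 1 := by omega
      have hjn : j ≤ n := by
        by_contra hc
        push_neg at hc
        have h1 : m * (n + 1) ≤ m * j := Nat.mul_le_mul_left m hc
        have h2 : m * (n + 1) = m * n + m := by ring
        rw [← hq] at h1
        omega
      have hj1 : 1 ≤ j := by
        by_contra hc
        have hj0 : j = 0 := by omega
        rw [hj0, Nat.mul_zero] at hq
        omega
      have hbj := h j hj1 hjn
      have hmono : bc (m * n) y s L ≤ bc (m * n) y s (m * j) :=
        bc_mono y s (by omega)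
      have hmul : m * bc (m * n) y s L ≤ m * (j - 1) :=
        Nat.mul_le_mul_left m (by omega)
      have hms : m * (j - 1) + m = m * j := by
        obtain ⟨jj, rfl⟩ : ∃ jj, j = jj + 1 := ⟨j - 1, by omega⟩
        simp [Nat.add_sub_cancel, Nat.mul_add]
      rw [← hq] at hms
      omega
    · intro h j hj1 hjn
      have hLN : m * j ≤ m * n := Nat.mul_le_mul_left m hjn
      have hL1 : 1 ≤ m * j := Nat.mul_pos hm (by omega)
      exact Nat.lt_of_mul_lt_mul_left (h (m * j) hL1 hLN)
  -- Step 3: window counts ↔ walk comparisons within one period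
  have hsval : s.val < m * n := ZMod.val_lt s
  have hwd : ∀ L, 1 ≤ L → L ≤ m * n →
      (m * bc (m * n) y s L < L ↔
        walk (m * n) (n - 1) m y (s.val + m * n - L) <
          walk (m * n) (n - 1) m y (s.val + m * n)) := by
    intro L h1 h2
    have hc := bc_count y s L h2
    unfold walk
    have hcast : ((s.val + m * n - L : ℕ) : ℤ) = ((s.val + m * n : ℕ) : ℤ) - L := by
      have : L ≤ s.val + m * n := by omega
      push_cast [this]
      ring
    have hcsum : ((csum (m * n) (n - 1) y (s.val + m * n) : ℕ) : ℤ)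
        = (csum (m * n) (n - 1) y (s.val + m * n - L) : ℤ)
          + (bc (m * n) y s L : ℤ) := by exact_mod_cast hc
    have hms : (m : ℤ) * csum (m * n) (n - 1) y (s.val + m * n)
        = (m : ℤ) * csum (m * n) (n - 1) y (s.val + m * n - L)
          + (m : ℤ) * bc (m * n) y s L := by
      rw [hcsum]; ring
    constructor
    · intro hlt
      have h3 : (m : ℤ) * bc (m * n) y s L < (L : ℤ) := by exact_mod_cast hlt
      rw [hcast]
      linarith
    · intro hlt
      rw [hcast] at hlt
      have h3 : (m : ℤ) * bc (m * n) y s L < (L : ℤ) := by linarith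
      exact_mod_cast h3
  have hQ3 : (∀ L, 1 ≤ L → L ≤ m * n → m * bc (m * n) y s L < L) ↔
      (∀ x, x < s.val + m * n → s.val + m * n ≤ x + m * n →
        walk (m * n) (n - 1) m y x < walk (m * n) (n - 1) m y (s.val + m * n)) := by
    constructor
    · intro h x hx1 hx2
      have := (hwd (s.val + m * n - x) (by omega) (by omega)).mp
        (h _ (by omega) (by omega))
      rwa [show s.val + m * n - (s.val + m * n - x) = x by omega] at this
    · intro h L h1 h2
      rw [hwd L h1 h2]
      exact h _ (by omega) (by omega)
  -- Step 4: drift of the walk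
  have hdrift : ∀ x, walk (m * n) (n - 1) m y (x + m * n)
      = walk (m * n) (n - 1) m y x + m := by
    intro x
    rw [walk_add_period]
    congr 1
    have hc : ((n - 1 : ℕ) : ℤ) = (n : ℤ) - 1 := by
      have : (1 : ℕ) ≤ n := by omega
      push_cast [this]
      ring
    rw [hc]
    push_cast
    ring
  have hWlt : ∀ x, walk (m * n) (n - 1) m y x < walk (m * n) (n - 1) m y (x + m * n) := by
    intro x
    rw [hdrift x]
    have : (0 : ℤ) < m := by exact_mod_cast hm
    omega
  constructor
  · intro hP
    exact ext_record _ (m * n) hNpos hWlt _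
      (hQ3.mp (hQ12.mp (hPkQ1.mp hP)))
  · intro hrec
    exact hPkQ1.mpr (hQ12.mpr (hQ3.mpr fun x hx1 _ => hrec x hx1))

end ParkAux

namespace ParkAux

lemma shifts_card {m n : ℕ} [NeZero (m * n)] (hm : 0 < m) (hn : 2 ≤ n)
    (y : Fin (n - 1) → ZMod (m * n)) :
    (Finset.univ.filter fun t : ZMod (m * n) =>
      IsParkingFunction m n fun k => (y k + t).val).card = m := by
  have hNpos : 0 < m * n := by positivity
  have hdrift : ∀ x, walk (m * n) (n - 1) m y (x + m * n)
      = walk (m * n) (n - 1) m y x + m := by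
    intro x
    rw [walk_add_period]
    congr 1
    have hc : ((n - 1 : ℕ) : ℤ) = (n : ℤ) - 1 := by
      have h1 : (1 : ℕ) ≤ n := by omega
      push_cast [h1]
      ring
    rw [hc]
    push_cast
    ring
  have hrc := records_card (walk (m * n) (n - 1) m y) (m * n) m hNpos hm
    (by unfold walk csum; simp) hdrift (fun x => walk_step_le y x)
  refine Eq.trans ?_ hrc
  apply Finset.card_bij (fun t _ => (-t).val + m * n)
  · intro t ht
    simp only [Finset.mem_filter, Finset.mem_univ, true_and] at ht
    simp only [Finset.mem_filter, Finset.mem_Ico]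
    refine ⟨⟨by omega, by have := ZMod.val_lt (-t); omega⟩, ?_⟩
    have heq : (fun k => (y k + t).val) = (fun k => (y k - (-t)).val) := by
      funext k; rw [sub_neg_eq_add]
    rw [heq] at ht
    exact (park_iff_records hm hn y (-t)).mp ht
  · intro t1 h1 t2 h2 heq
    have hval : (-t1).val = (-t2).val := by omega
    have hneg : -t1 = -t2 := ZMod.val_injective _ hval
    exact neg_injective hneg
  · intro s' hs'
    simp only [Finset.mem_filter, Finset.mem_Ico] at hs'
    obtain ⟨⟨hge, hlt⟩, hrec⟩ := hs'
    refine ⟨-(((s' - m * n : ℕ)) : ZMod (m * n)), ?_, ?_⟩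
    · simp only [Finset.mem_filter, Finset.mem_univ, true_and]
      have hval : ((((s' - m * n : ℕ)) : ZMod (m * n))).val = s' - m * n :=
        ZMod.val_cast_of_lt (by omega)
      have heq : (fun k => (y k + -(((s' - m * n : ℕ)) : ZMod (m * n))).val)
          = (fun k => (y k - (((s' - m * n : ℕ)) : ZMod (m * n))).val) := by
        funext k; rw [sub_eq_add_neg]
      rw [heq]
      apply (park_iff_records hm hn y _).mpr
      rw [hval, show s' - m * n + m * n = s' by omega]
      exact hrec
    · rw [neg_neg, ZMod.val_cast_of_lt (show s' - m * n < m * n by omega)]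
      omega

end ParkAux

theorem numParkingFunctions (m n : ℕ) (hm : 0 < m) (hn : 2 ≤ n) :
    Nat.card {a : Fin (n - 1) → ℕ // IsParkingFunction m n a} =
      m ^ (n - 1) * n ^ (n - 2) := by
  classical
  haveI : NeZero (m * n) := ⟨by positivity⟩
  have h21 : n - 1 = (n - 2) + 1 := by omega
  have hpow : (m * n) ^ (n - 1) = (m * n) ^ (n - 2) * (m * n) := by
    rw [h21, pow_succ]
  have hmpow : m ^ (n - 1) = m ^ (n - 2) * m := by
    rw [h21, pow_succ]
  have hNpos : 0 < m * n := by positivity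
  have hmn : m * (n - 1) + m = m * n := by
    rw [← Nat.mul_succ]
    congr 1
    omega
  -- every parking function is bounded by m * n
  have hbound : ∀ a : Fin (n - 1) → ℕ, IsParkingFunction m n a → ∀ k, a k < m * n := by
    intro a ha k
    have hi : (n - 2) + 1 ≤ (Finset.univ.filter fun k =>
        a k ≤ m * ((n - 2) + 1) - 1).card := ha ⟨n - 2, by omega⟩
    rw [show n - 2 + 1 = n - 1 by omega] at hi
    have hfull : (Finset.univ.filter fun k : Fin (n - 1) =>
        a k ≤ m * (n - 1) - 1) = Finset.univ := by
      apply Finset.eq_univ_of_card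
      have hle : (Finset.univ.filter fun k : Fin (n - 1) => a k ≤ m * (n - 1) - 1).card
          ≤ (Finset.univ : Finset (Fin (n - 1))).card := Finset.card_filter_le _ _
      rw [Finset.card_univ, Fintype.card_fin] at hle
      rw [Fintype.card_fin]
      omega
    have hk := Finset.mem_filter.mp (hfull ▸ Finset.mem_univ k)
    have h1 : 1 ≤ m * (n - 1) := Nat.mul_pos hm (by omega)
    omega
  -- transfer to residues mod m * n
  have e : {a : Fin (n - 1) → ℕ // IsParkingFunction m n a} ≃
      {yy : Fin (n - 1) → ZMod (m * n) // IsParkingFunction m n fun k => (yy k).val} :=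
    { toFun := fun a => ⟨fun k => ((a.1 k : ℕ) : ZMod (m * n)), by
        have hb := hbound a.1 a.2
        have hfun : (fun k => (((a.1 k : ℕ) : ZMod (m * n))).val) = a.1 := by
          funext k; exact ZMod.val_cast_of_lt (hb k)
        rw [hfun]; exact a.2⟩
      invFun := fun yy => ⟨fun k => (yy.1 k).val, yy.2⟩
      left_inv := fun a => Subtype.ext (funext fun k =>
        ZMod.val_cast_of_lt (hbound a.1 a.2 k))
      right_inv := fun yy => Subtype.ext (funext fun k =>
        ZMod.natCast_rightInverse (yy.1 k)) }
  rw [Nat.card_congr e, Nat.card_eq_fintype_card, Fintype.card_subtype]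
  -- double counting
  have hdc : ∑ t : ZMod (m * n), (Finset.univ.filter fun yy : Fin (n - 1) → ZMod (m * n) =>
        IsParkingFunction m n fun k => (yy k + t).val).card
      = ∑ yy : Fin (n - 1) → ZMod (m * n), (Finset.univ.filter fun t : ZMod (m * n) =>
        IsParkingFunction m n fun k => (yy k + t).val).card := by
    simp only [Finset.card_filter]
    rw [Finset.sum_comm]
  have hleft : ∀ t : ZMod (m * n),
      (Finset.univ.filter fun yy : Fin (n - 1) → ZMod (m * n) =>
        IsParkingFunction m n fun k => (yy k + t).val).card
      = (Finset.univ.filter fun yy : Fin (n - 1) → ZMod (m * n) =>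
        IsParkingFunction m n fun k => (yy k).val).card := by
    intro t
    apply Finset.card_bij (fun yy _ => fun k => yy k + t)
    · intro yy hyy
      simp only [Finset.mem_filter, Finset.mem_univ, true_and] at *
      exact hyy
    · intro a2 _ b2 _ hab
      funext k
      exact add_right_cancel (congrFun hab k)
    · intro zz hzz
      simp only [Finset.mem_filter, Finset.mem_univ, true_and] at hzz
      refine ⟨fun k => zz k - t, ?_, ?_⟩
      · simp only [Finset.mem_filter, Finset.mem_univ, true_and]
        have hfun : (fun k => (zz k - t + t).val) = fun k => (zz k).val := by
          funext k; rw [sub_add_cancel]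
        rw [hfun]
        exact hzz
      · funext k; rw [sub_add_cancel]
  have hright : ∀ yy : Fin (n - 1) → ZMod (m * n),
      (Finset.univ.filter fun t : ZMod (m * n) =>
        IsParkingFunction m n fun k => (yy k + t).val).card = m :=
    fun yy => ParkAux.shifts_card hm hn yy
  rw [Finset.sum_congr rfl (fun t _ => hleft t),
      Finset.sum_congr rfl (fun yy _ => hright yy),
      Finset.sum_const, Finset.sum_const, Finset.card_univ, Finset.card_univ,
      ZMod.card, Fintype.card_fun, ZMod.card, Fintype.card_fin,
      smul_eq_mul, smul_eq_mul] at hdc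
  -- hdc : (m*n) * card = (m*n)^(n-1) * m
  have hcard : (Finset.univ.filter fun yy : Fin (n - 1) → ZMod (m * n) =>
      IsParkingFunction m n fun k => (yy k).val).card = (m * n) ^ (n - 2) * m := by
    apply Nat.eq_of_mul_eq_mul_left hNpos
    rw [hdc, hpow]
    ring
  rw [hcard, mul_pow, hmpow]
  ring
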